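/- (Corollary 1, Robust DDP, trajectory form.) Let T ≥ 1 be a natural number. Suppose that for each t ∈ {0, …, T−1} we are given reference points x_t^r ∈ ℝⁿ, u_t^r ∈ ℝᵐ, w_t^r ∈ ℝᵈ, a symmetric (1+n)×(1+n) matrix P_t, symmetric (1+n+m+d)×(1+n+m+d) matrices Q_t and M_t, a vector k_t¹ ∈ ℝᵐ and an m×n matrix K_t², and additionally a reference point x_T^r ∈ ℝⁿ and a symmetric (1+n)×(1+n) matrix P_T. For t ∈ {0, …, T} define Ṽ_t(x) := η_t(x)ᵀ P_t η_t(x), where η_t(x) is the concatenation of 1 and x − x_t^r; for t ∈ {0, …, T−1} define π̃_t(x) := u_t^r + k_t¹ + K_t²(x − x_t^r), and let ξ_t(x,u,w) be the concatenation of 1, x−x_t^r, u−u_t^r, w−w_t^r. Assume for each t ∈ {0, …, T−1}: (i) for all x, u, w: f0(x,u) + Ṽ_{t+1}(f(x,u,w)) ≤ ξ_t(x,u,w)ᵀ Q_t ξ_t(x,u,w); (ii) for all x, u, w with w ∈ C(g(x,u,w)): ξ_t(x,u,w)ᵀ M_t ξ_t(x,u,w) ≥ 0; (iii) E(k_t¹,K_t²)ᵀ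 (Q_t + M_t − P̂_t) E(k_t¹,K_t²) is negative definite. Let V_T : ℝⁿ → ℝ be a terminal cost with V_T(x) ≤ Ṽ_T(x) for all x ∈ ℝⁿ. Then for every pair of sequences x₀, …, x_T ∈ ℝⁿ and w₀, …, w_{T−1} ∈ ℝᵈ satisfying x_{t+1} = f(x_t, π̃_t(x_t), w_t) and w_t ∈ C(g(x_t, π̃_t(x_t), w_t)) for all t ∈ {0, …, T−1}: Σ_{t=0}^{T−1} f0(x_t, π̃_t(x_t)) + V_T(x_T) ≤ Ṽ_0(x₀). -/

import Mathlib

open Matrix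

/-- Index type for the vector `ξ = (1, δx, δu, δw)` of size `1+n+m+d`. -/
abbrev XiIdx (n m d : ℕ) := Unit ⊕ (Fin n ⊕ (Fin m ⊕ Fin d))

/-- Index type for the vector `η = (1, δx)` of size `1+n`. -/
abbrev EtaIdx (n : ℕ) := Unit ⊕ Fin n

/-- Index type for `(τ, a, b) ∈ ℝ × ℝⁿ × ℝᵈ` of size `1+n+d`. -/
abbrev TabIdx (n d : ℕ) := Unit ⊕ (Fin n ⊕ Fin d)

/-- The vector `ξ(x,u,w) = (1, x - x_r, u - u_r, w - w_r)`. -/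
def xiVec {n m d : ℕ} (xr : Fin n → ℝ) (ur : Fin m → ℝ) (wr : Fin d → ℝ)
    (x : Fin n → ℝ) (u : Fin m → ℝ) (w : Fin d → ℝ) : XiIdx n m d → ℝ :=
  Sum.elim (fun _ => 1) (Sum.elim (x - xr) (Sum.elim (u - ur) (w - wr)))

/-- The vector `η(x) = (1, x - x_r)`. -/
def etaVec {n : ℕ} (xr : Fin n → ℝ) (x : Fin n → ℝ) : EtaIdx n → ℝ :=
  Sum.elim (fun _ => 1) (x - xr)

/-- The `(1+n+m+d)×(1+n+d)` matrix `E(k¹,K²)` mapping `(τ,a,b)` to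
`(τ, a, τ·k¹ + K²a, b)`. -/
def Emat {n m d : ℕ} (k1 : Fin m → ℝ) (K2 : Matrix (Fin m) (Fin n) ℝ) :
    Matrix (XiIdx n m d) (TabIdx n d) ℝ :=
  Matrix.of fun i j =>
    match i, j with
    | Sum.inl _, Sum.inl _ => 1
    | Sum.inl _, Sum.inr _ => 0
    | Sum.inr (Sum.inl p), Sum.inr (Sum.inl q) => if p = q then (1 : ℝ) else 0
    | Sum.inr (Sum.inl _), _ => 0
    | Sum.inr (Sum.inr (Sum.inl p)), Sum.inl _ => k1 p
    | Sum.inr (Sum.inr (Sum.inl p)), Sum.inr (Sum.inl q) => K2 p q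
    | Sum.inr (Sum.inr (Sum.inl _)), Sum.inr (Sum.inr _) => 0
    | Sum.inr (Sum.inr (Sum.inr p)), Sum.inr (Sum.inr q) => if p = q then (1 : ℝ) else 0
    | Sum.inr (Sum.inr (Sum.inr _)), _ => 0

/-- The injection matrix of the leading principal `(1+n)` block into `1+n+m+d`. -/
def Jmat {n m d : ℕ} : Matrix (XiIdx n m d) (EtaIdx n) ℝ :=
  Matrix.of fun i j =>
    match i, j with
    | Sum.inl _, Sum.inl _ => 1
    | Sum.inr (Sum.inl p), Sum.inr q => if p = q then (1 : ℝ) else 0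
    | _, _ => 0

/-- `P̂`: the `(1+n+m+d)×(1+n+m+d)` matrix with `P` as its leading principal
`(1+n)×(1+n)` block and all other entries zero. -/
def Phat {n m d : ℕ} (P : Matrix (EtaIdx n) (EtaIdx n) ℝ) :
    Matrix (XiIdx n m d) (XiIdx n m d) ℝ :=
  (Jmat (n := n) (m := m) (d := d) * P : Matrix (XiIdx n m d) (EtaIdx n) ℝ) *
    (Jmat (n := n) (m := m) (d := d))ᵀ

/-- The affine policy `π̃_t(x) = u_t^r + k_t¹ + K_t²(x - x_t^r)`. -/
def affPolicy {n m : ℕ} (ur : Fin m → ℝ) (xr : Fin n → ℝ) (k1 : Fin m → ℝ)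
    (K2 : Matrix (Fin m) (Fin n) ℝ) (x : Fin n → ℝ) : Fin m → ℝ :=
  ur + k1 + K2.mulVec (x - xr)


/-- The vector `(1, x - xr, w - wr)`. -/
def tabVec {n d : ℕ} (xr : Fin n → ℝ) (wr : Fin d → ℝ)
    (x : Fin n → ℝ) (w : Fin d → ℝ) : TabIdx n d → ℝ :=
  Sum.elim (fun _ => 1) (Sum.elim (x - xr) (w - wr))

lemma emat_mulVec_tab {n m d : ℕ} (xr : Fin n → ℝ) (ur : Fin m → ℝ) (wr : Fin d → ℝ)
    (k1 : Fin m → ℝ) (K2 : Matrix (Fin m) (Fin n) ℝ) (x : Fin n → ℝ) (w : Fin d → ℝ) :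
    (Emat (n := n) (m := m) (d := d) k1 K2).mulVec (tabVec xr wr x w)
      = xiVec xr ur wr x (affPolicy ur xr k1 K2 x) w := by
  funext i
  rcases i with _ | (p | (p | p)) <;>
    simp [Matrix.mulVec, dotProduct, Fintype.sum_sum_type, Emat, tabVec,
      xiVec, affPolicy, Matrix.mulVec, dotProduct, ite_mul,
      Finset.sum_ite_eq, Pi.sub_apply, Pi.add_apply, mul_comm]
  ring

lemma jmatT_mulVec_xi {n m d : ℕ} (xr : Fin n → ℝ) (ur : Fin m → ℝ) (wr : Fin d → ℝ)
    (x : Fin n → ℝ) (u : Fin m → ℝ) (w : Fin d → ℝ) :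
    (Jmat (n := n) (m := m) (d := d))ᵀ.mulVec (xiVec xr ur wr x u w) = etaVec xr x := by
  funext i
  rcases i with _ | p <;>
    simp [Matrix.mulVec, dotProduct, Fintype.sum_sum_type, Jmat,
      xiVec, etaVec, Matrix.transpose_apply, ite_mul, Finset.sum_ite_eq]

lemma telescope_sum {T : ℕ} (W : Fin (T + 1) → ℝ) :
    ∑ t : Fin T, (W t.castSucc - W t.succ) = W 0 - W (Fin.last T) := by
  induction T with
  | zero => simp
  | succ T ih =>
    rw [Fin.sum_univ_castSucc]
    have := ih (fun t => W t.castSucc)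
    simp only [Fin.succ_castSucc] at this ⊢
    rw [this]
    have h0 : ((0 : Fin (T+1)).castSucc : Fin (T+2)) = 0 := rfl
    have hl : (Fin.last T).succ = Fin.last (T+1) := rfl
    rw [h0, hl]
    ring

/-- **Corollary 1 (Robust DDP, trajectory form).** The quadratic value-function
approximations produced by the robust DDP backward pass upper-bound the
accumulated cost of the generated affine policy along every admissible
uncertainty realization. -/
theorem robust_ddp_corollary
    (n m d l : ℕ) (T : ℕ) (hT : 1 ≤ T)
    (f : (Fin n → ℝ) → (Fin m → ℝ) → (Fin d → ℝ) → (Fin n → ℝ))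
    (g : (Fin n → ℝ) → (Fin m → ℝ) → (Fin d → ℝ) → (Fin l → ℝ))
    (f0 : (Fin n → ℝ) → (Fin m → ℝ) → ℝ)
    (C : (Fin l → ℝ) → Set (Fin d → ℝ))
    (xr : Fin (T + 1) → Fin n → ℝ)
    (ur : Fin T → Fin m → ℝ) (wr : Fin T → Fin d → ℝ)
    (P : Fin (T + 1) → Matrix (EtaIdx n) (EtaIdx n) ℝ)
    (hPsymm : ∀ t, (P t).IsSymm)
    (Q M : Fin T → Matrix (XiIdx n m d) (XiIdx n m d) ℝ)
    (hQsymm : ∀ t, (Q t).IsSymm) (hMsymm : ∀ t, (M t).IsSymm)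
    (k1 : Fin T → Fin m → ℝ) (K2 : Fin T → Matrix (Fin m) (Fin n) ℝ)
    (h1 : ∀ (t : Fin T) (x : Fin n → ℝ) (u : Fin m → ℝ) (w : Fin d → ℝ),
      f0 x u +
          etaVec (xr t.succ) (f x u w) ⬝ᵥ
            (P t.succ).mulVec (etaVec (xr t.succ) (f x u w)) ≤
        xiVec (xr t.castSucc) (ur t) (wr t) x u w ⬝ᵥ
          (Q t).mulVec (xiVec (xr t.castSucc) (ur t) (wr t) x u w))
    (h2 : ∀ (t : Fin T) (x : Fin n → ℝ) (u : Fin m → ℝ) (w : Fin d → ℝ),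
      w ∈ C (g x u w) →
      0 ≤ xiVec (xr t.castSucc) (ur t) (wr t) x u w ⬝ᵥ
            (M t).mulVec (xiVec (xr t.castSucc) (ur t) (wr t) x u w))
    (h3 : ∀ t : Fin T,
      (-((Emat (n := n) (m := m) (d := d) (k1 t) (K2 t))ᵀ *
          (Q t + M t - Phat (P t.castSucc)) *
          Emat (n := n) (m := m) (d := d) (k1 t) (K2 t))).PosDef)
    (VT : (Fin n → ℝ) → ℝ)
    (hVT : ∀ x : Fin n → ℝ,
      VT x ≤ etaVec (xr (Fin.last T)) x ⬝ᵥ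
        (P (Fin.last T)).mulVec (etaVec (xr (Fin.last T)) x))
    (x : Fin (T + 1) → Fin n → ℝ) (w : Fin T → Fin d → ℝ)
    (hdyn : ∀ t : Fin T,
      x t.succ = f (x t.castSucc)
        (affPolicy (ur t) (xr t.castSucc) (k1 t) (K2 t) (x t.castSucc)) (w t))
    (hadm : ∀ t : Fin T,
      w t ∈ C (g (x t.castSucc)
        (affPolicy (ur t) (xr t.castSucc) (k1 t) (K2 t) (x t.castSucc)) (w t))) :
    (∑ t : Fin T,
        f0 (x t.castSucc)
          (affPolicy (ur t) (xr t.castSucc) (k1 t) (K2 t) (x t.castSucc))) +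
        VT (x (Fin.last T)) ≤
      etaVec (xr 0) (x 0) ⬝ᵥ (P 0).mulVec (etaVec (xr 0) (x 0)) := by
  classical
  -- per-step inequality
  set Vt : Fin (T+1) → ℝ := fun t => etaVec (xr t) (x t) ⬝ᵥ (P t).mulVec (etaVec (xr t) (x t))
    with hVt
  have key : ∀ t : Fin T,
      f0 (x t.castSucc) (affPolicy (ur t) (xr t.castSucc) (k1 t) (K2 t) (x t.castSucc))
        ≤ Vt t.castSucc - Vt t.succ := by
    intro t
    set u := affPolicy (ur t) (xr t.castSucc) (k1 t) (K2 t) (x t.castSucc) with hu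
    set ξ := xiVec (xr t.castSucc) (ur t) (wr t) (x t.castSucc) u (w t) with hξ
    have hQ : f0 (x t.castSucc) u + Vt t.succ ≤ ξ ⬝ᵥ (Q t).mulVec ξ := by
      have := h1 t (x t.castSucc) u (w t)
      rw [← hdyn t] at this
      exact this
    have hM : 0 ≤ ξ ⬝ᵥ (M t).mulVec ξ := h2 t _ _ _ (hadm t)
    -- ξ = E.mulVec tab
    have hEξ : (Emat (n := n) (m := m) (d := d) (k1 t) (K2 t)).mulVec
        (tabVec (xr t.castSucc) (wr t) (x t.castSucc) (w t)) = ξ :=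
      emat_mulVec_tab _ _ _ _ _ _ _
    -- negative semidefiniteness gives ξᵀ(Q+M−P̂)ξ ≤ 0
    have hneg : ξ ⬝ᵥ ((Q t + M t - Phat (P t.castSucc)).mulVec ξ) ≤ 0 := by
      have hsd := (h3 t).posSemidef.dotProduct_mulVec_nonneg
          (tabVec (xr t.castSucc) (wr t) (x t.castSucc) (w t))
      rw [Matrix.neg_mulVec, dotProduct_neg] at hsd
      have h0 : 0 ≤ -(tabVec (xr t.castSucc) (wr t) (x t.castSucc) (w t) ⬝ᵥ
          ((Emat (n := n) (m := m) (d := d) (k1 t) (K2 t))ᵀ * (Q t + M t - Phat (P t.castSucc)) *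
            Emat (n := n) (m := m) (d := d) (k1 t) (K2 t)).mulVec
            (tabVec (xr t.castSucc) (wr t) (x t.castSucc) (w t))) := hsd
    -- rewrite the quadratic form through E
      have hform : tabVec (xr t.castSucc) (wr t) (x t.castSucc) (w t) ⬝ᵥ
          ((Emat (n := n) (m := m) (d := d) (k1 t) (K2 t))ᵀ * (Q t + M t - Phat (P t.castSucc)) *
            Emat (n := n) (m := m) (d := d) (k1 t) (K2 t)).mulVec
            (tabVec (xr t.castSucc) (wr t) (x t.castSucc) (w t))
          = ξ ⬝ᵥ (Q t + M t - Phat (P t.castSucc)).mulVec ξ := by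
        rw [← hEξ]
        rw [Matrix.mul_assoc, ← Matrix.mulVec_mulVec, ← Matrix.mulVec_mulVec,
          Matrix.dotProduct_mulVec, Matrix.vecMul_transpose]
      linarith [hform ▸ h0]
    -- ξᵀ P̂ ξ = ηᵀ P η = Vt t.castSucc
    have hPform : ξ ⬝ᵥ (Phat (P t.castSucc)).mulVec ξ = Vt t.castSucc := by
      rw [Phat, Matrix.mul_assoc, ← Matrix.mulVec_mulVec, ← Matrix.mulVec_mulVec,
        Matrix.dotProduct_mulVec, ← Matrix.mulVec_transpose]
      have hJ := jmatT_mulVec_xi (m := m) (d := d) (xr t.castSucc) (ur t) (wr t)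
        (x t.castSucc) u (w t)
      rw [show ((Jmat (n:=n) (m:=m) (d:=d))ᵀ *ᵥ ξ : EtaIdx n → ℝ)
          = etaVec (xr t.castSucc) (x t.castSucc) from hJ]
    have hsplit : ξ ⬝ᵥ ((Q t + M t - Phat (P t.castSucc)).mulVec ξ)
        = ξ ⬝ᵥ (Q t).mulVec ξ + ξ ⬝ᵥ (M t).mulVec ξ
          - ξ ⬝ᵥ (Phat (P t.castSucc)).mulVec ξ := by
      rw [sub_eq_add_neg, Matrix.add_mulVec, Matrix.add_mulVec, Matrix.neg_mulVec,
        dotProduct_add, dotProduct_add, dotProduct_neg]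
      ring
    rw [hsplit, hPform] at hneg
    linarith
  have hsum : (∑ t : Fin T,
      f0 (x t.castSucc) (affPolicy (ur t) (xr t.castSucc) (k1 t) (K2 t) (x t.castSucc)))
      ≤ Vt 0 - Vt (Fin.last T) := by
    calc _ ≤ ∑ t : Fin T, (Vt t.castSucc - Vt t.succ) :=
          Finset.sum_le_sum fun t _ => key t
      _ = Vt 0 - Vt (Fin.last T) := telescope_sum Vt
  have hVTle := hVT (x (Fin.last T))
  have : Vt (Fin.last T) = etaVec (xr (Fin.last T)) (x (Fin.last T)) ⬝ᵥ
      (P (Fin.last T)).mulVec (etaVec (xr (Fin.last T)) (x (Fin.last T))) := rfl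
  have hV0 : Vt 0 = etaVec (xr 0) (x 0) ⬝ᵥ (P 0).mulVec (etaVec (xr 0) (x 0)) := rfl
  linarith
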